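/- Let p, q be distinct primes. Every indecomposable cycle set of cardinality pq with abelian permutation group is isomorphic to (Z/pqZ, ·) with i·j = j+1, whose permutation group is cyclic of order pq. -/

import Mathlib

/-- A cycle set: a set with bijective left multiplications `σ x`
satisfying `(x·y)·(x·z) = (y·x)·(y·z)`. -/
structure CycleSet (X : Type*) where
  σ : X → Equiv.Perm X
  cycl : ∀ x y z : X, σ (σ x y) (σ x z) = σ (σ y x) (σ y z)

namespace CycleSet

variable {X Y : Type*}

/-- The permutation group generated by the left multiplications. -/
def permGroup (S : CycleSet X) : Subgroup (Equiv.Perm X) :=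
  Subgroup.closure (Set.range S.σ)

/-- Indecomposability: the permutation group acts transitively. -/
def Transitive (S : CycleSet X) : Prop :=
  ∀ x y : X, ∃ g ∈ S.permGroup, g x = y

/-- The permutation group is abelian. -/
def AbelianPerm (S : CycleSet X) : Prop :=
  ∀ g ∈ S.permGroup, ∀ h ∈ S.permGroup, g * h = h * g

/-- `rel S n x y` holds iff `x` and `y` become equal in the `n`-th iterated
retraction `σ^n(X)`. -/
def rel (S : CycleSet X) : ℕ → X → X → Prop
  | 0 => Eq
  | n + 1 => fun x y => ∀ z, S.rel n (S.σ x z) (S.σ y z)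

/-- The cardinality `|σ^n(X)|` of the `n`-th iterated retraction. -/
noncomputable def retCard (S : CycleSet X) (n : ℕ) : ℕ :=
  Nat.card (Quot (S.rel n))

/-- `X` is multipermutational of level `m`: `m` is minimal with `|σ^m(X)| = 1`. -/
def MultipermLevel (S : CycleSet X) (m : ℕ) : Prop :=
  (∀ x y, S.rel m x y) ∧ ∀ k < m, ¬ (∀ x y, S.rel k x y)

/-- Isomorphism of cycle sets. -/
def Isomorphic (S : CycleSet X) (T : CycleSet Y) : Prop :=
  ∃ F : X → Y, Function.Bijective F ∧ ∀ x y, F (S.σ x y) = T.σ (F x) (F y)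

end CycleSet



section LemmaA
variable {G : Type*} [CommGroup G] [Finite G]

/-- divisors of p*q -/
lemma dvd_prime_mul' {p q m : ℕ} (hp : p.Prime) (hq : q.Prime) (h : m ∣ p * q) :
    m = 1 ∨ m = p ∨ m = q ∨ m = p * q := by
  rcases (Nat.dvd_mul.mp h) with ⟨a, b, ha, hb, rfl⟩
  rcases (Nat.Prime.eq_one_or_self_of_dvd hp a ha) with rfl | rfl <;>
    rcases (Nat.Prime.eq_one_or_self_of_dvd hq b hb) with rfl | rfl <;> simp

lemma lemA (p q : ℕ) (hp : p.Prime) (hq : q.Prime) (hpq : p ≠ q)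
    (hcard : Nat.card G = p * q) (s : G → G)
    (cond : ∀ g h, s (s g * h) * s g = s (s h * g) * s h)
    (gen : Subgroup.closure (Set.range s) = ⊤) :
    ∀ g h, s g = s h := by
  -- the submonoid closure of range s is everything
  have hMtop : Submonoid.closure (Set.range s) = ⊤ := by
    have hG : (⟨Submonoid.closure (Set.range s), fun {x} hx => by
        have h1 : x * x ^ (Nat.card G - 1) = 1 := by
          rw [← pow_succ']
          have : Nat.card G - 1 + 1 = Nat.card G :=
            Nat.succ_pred_eq_of_pos Nat.card_pos
          rw [this, pow_card_eq_one']
        rw [inv_eq_of_mul_eq_one_right h1]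
        exact Submonoid.pow_mem _ hx _⟩ : Subgroup G) = ⊤ := by
      rw [← top_le_iff, ← gen]
      exact Subgroup.closure_le _ |>.mpr Submonoid.subset_closure
    have := congrArg (fun H : Subgroup G => H.toSubmonoid) hG
    simpa using this
  -- everything is in the monoid closure: write as list product
  have hlist : ∀ t : G, ∃ l : List G, (∀ y ∈ l, y ∈ Set.range s) ∧ l.prod = t := by
    intro t
    exact Submonoid.exists_list_of_mem_closure (by rw [hMtop]; trivial)
  -- the main propagation lemma
  have Lmain : ∀ K₀ : Subgroup G, (∀ k ∈ K₀, ∀ g, s (g * k) = s g) →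
      ∀ x₁ x₂, s x₁ / s x₂ ∈ K₀ → ∀ t, s (t * x₁) / s (t * x₂) ∈ K₀ := by
    intro K₀ hper x₁ x₂ hx t
    -- one-step
    have step1 : ∀ y₁ y₂, s y₁ / s y₂ ∈ K₀ → ∀ g,
        s (s g * y₁) / s (s g * y₂) = s y₁ / s y₂ := by
      intro y₁ y₂ hy g
      have e1 : s (s g * y₁) * s g = s (s y₁ * g) * s y₁ := cond g y₁
      have e2 : s (s g * y₂) * s g = s (s y₂ * g) * s y₂ := cond g y₂
      have e3 : s (s y₂ * g) = s (s y₁ * g) := by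
        have hk : s y₂ / s y₁ ∈ K₀ := by
          have := inv_mem hy; rwa [inv_div] at this
        have := hper _ hk (s y₁ * g)
        rw [← this]; congr 1
        simp [div_eq_mul_inv, mul_comm, mul_assoc, mul_left_comm]
      rw [e3] at e2
      have h1 : s (s g * y₁) = s (s y₁ * g) * s y₁ / s g := by
        rw [← e1, mul_div_cancel_right]
      have h2 : s (s g * y₂) = s (s y₁ * g) * s y₂ / s g := by
        rw [← e2, mul_div_cancel_right]
      rw [h1, h2]
      simp [div_eq_mul_inv, mul_comm, mul_assoc, mul_left_comm]
    obtain ⟨l, hl, rfl⟩ := hlist t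
    induction l with
    | nil => simpa using hx
    | cons u l ih =>
      have hu : u ∈ Set.range s := hl u (by simp)
      obtain ⟨g, rfl⟩ := hu
      have hmem : s (l.prod * x₁) / s (l.prod * x₂) ∈ K₀ :=
        ih (fun y hy => hl y (by simp [hy]))
      have := step1 _ _ hmem g
      simp only [List.prod_cons]
      rw [mul_assoc, mul_assoc, this]
      exact hmem
  -- the period subgroup K
  set K : Subgroup G := {
    carrier := {k | ∀ g, s (g * k) = s g}
    one_mem' := by intro g; rw [mul_one]
    mul_mem' := by
      intro k₁ k₂ h₁ h₂ g
      rw [← mul_assoc, h₂ (g * k₁), h₁ g]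
    inv_mem' := by
      intro k hk g
      have := hk (g * k⁻¹)
      rw [mul_assoc, inv_mul_cancel, mul_one] at this
      exact this.symm } with hKdef
  have hKmem : ∀ k, k ∈ K ↔ ∀ g, s (g * k) = s g := fun k => Iff.rfl
  have hKper : ∀ k ∈ K, ∀ g, s (g * k) = s g := fun k hk => hk
  by_cases hKtop : K = ⊤
  · -- s is constant
    intro g h
    have hg : s g = s 1 := by
      have : g ∈ K := hKtop ▸ Subgroup.mem_top g
      have := this 1; rwa [one_mul] at this
    have hh : s h = s 1 := by
      have : h ∈ K := hKtop ▸ Subgroup.mem_top h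
      have := this 1; rwa [one_mul] at this
    rw [hg, hh]
  · exfalso
    -- the relative period subgroup K'
    set K' : Subgroup G := {
      carrier := {k | ∀ g, s (g * k) / s g ∈ K}
      one_mem' := by
        intro g
        rw [mul_one, div_self']
        exact one_mem K
      mul_mem' := by
        intro k₁ k₂ h₁ h₂ g
        have : s (g * (k₁ * k₂)) / s g
            = (s (g * k₁ * k₂) / s (g * k₁)) * (s (g * k₁) / s g) := by
          rw [← mul_assoc]
          simp [div_eq_mul_inv, mul_assoc]
        rw [this]
        exact mul_mem (h₂ (g * k₁)) (h₁ g)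
      inv_mem' := by
        intro k hk g
        have := hk (g * k⁻¹)
        rw [mul_assoc, inv_mul_cancel, mul_one] at this
        have := inv_mem this
        rwa [inv_div] at this } with hK'def
    have hKK' : K ≤ K' := by
      intro k hk g
      rw [hKper k hk g, div_self']
      exact one_mem K
    -- main implication from Lmain
    have himp : ∀ x₁ x₂, s x₁ / s x₂ ∈ K → x₁ / x₂ ∈ K' := by
      intro x₁ x₂ hx g
      have := Lmain K hKper x₁ x₂ hx (g / x₂)
      have h1 : g / x₂ * x₁ = g * (x₁ / x₂) := by
        simp [div_eq_mul_inv, mul_comm, mul_assoc, mul_left_comm]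
      have h2 : g / x₂ * x₂ = g := by
        simp [div_eq_mul_inv, mul_assoc]
      rwa [h1, h2] at this
    -- range s ⊆ K gives a contradiction
    have hrange : ¬ (∀ g, s g ∈ K) := by
      intro hr
      apply hKtop
      apply Subgroup.eq_top_of_card_eq
      rw [hcard]
      have : (⊤ : Subgroup G) ≤ K := by
        rw [← gen]
        exact (Subgroup.closure_le K).mpr (by rintro x ⟨g, rfl⟩; exact hr g)
      have h1 := Subgroup.card_le_of_le this
      have h2 := Subgroup.card_le_of_le (le_top (a := K))
      have := le_antisymm h2 h1
      rw [this, ← hcard]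
      exact (Nat.card_congr (Equiv.Set.univ G)).symm ▸ rfl
    by_cases hK'K : K' = K
    · -- "injective" case
      -- the induced map on the quotient is injective, hence surjective
      have hwd : ∀ g₁ g₂ : G, (QuotientGroup.mk g₁ : G ⧸ K) = QuotientGroup.mk g₂ →
          (QuotientGroup.mk (s g₁) : G ⧸ K) = QuotientGroup.mk (s g₂) := by
        intro g₁ g₂ hg
        rw [QuotientGroup.eq] at hg ⊢
        have : s g₂ = s g₁ := by
          have := hKper _ hg g₁
          rw [← mul_assoc, mul_inv_cancel, one_mul] at this
          rw [← this]
        rw [this, inv_mul_cancel]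
        exact one_mem K
      let sbar : G ⧸ K → G ⧸ K := fun x =>
        Quotient.liftOn' x (fun g => QuotientGroup.mk (s g)) (fun g₁ g₂ h =>
          hwd g₁ g₂ (Quotient.sound' h))
      have hsbar : ∀ g : G, sbar (QuotientGroup.mk g) = QuotientGroup.mk (s g) :=
        fun g => rfl
      have hinj : Function.Injective sbar := by
        intro x₁ x₂
        induction x₁ using QuotientGroup.induction_on with | H g₁ =>
        induction x₂ using QuotientGroup.induction_on with | H g₂ =>
        intro h
        rw [hsbar, hsbar, QuotientGroup.eq] at h
        have hK1 : s g₁ / s g₂ ∈ K := by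
          have := inv_mem h
          rwa [← div_eq_inv_mul, inv_div] at this
        have := himp g₁ g₂ hK1
        rw [hK'K] at this
        rw [QuotientGroup.eq, ← div_eq_inv_mul]
        have := inv_mem this
        rwa [inv_div] at this
      have hsurj : Function.Surjective sbar := Finite.surjective_of_injective hinj
      obtain ⟨x, hx⟩ := hsurj (1 : G ⧸ K)
      induction x using QuotientGroup.induction_on with | H h₀ =>
      rw [hsbar, QuotientGroup.eq_one_iff] at hx
      -- now s h₀ ∈ K; derive s g ∈ K for all g
      apply hrange
      intro g
      have e1 : s (s g * h₀) * s g = s (s h₀ * g) * s h₀ := cond g h₀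
      have e2 : s (s h₀ * g) = s g := by
        have := hKper _ hx g
        rw [← this]; congr 1; exact mul_comm _ _
      rw [e2, mul_comm (s g) (s h₀)] at e1
      have e3 : s (s g * h₀) = s h₀ := mul_right_cancel e1
      have hK1 : s (s g * h₀) / s h₀ ∈ K := by rw [e3, div_self']; exact one_mem K
      have := himp _ _ hK1
      rw [hK'K] at this
      have h4 : s g * h₀ / h₀ = s g := by
        rw [mul_div_assoc, div_self', mul_one]
      rwa [h4] at this
    · -- K' = ⊤ via cardinalities
      have hm : Nat.card K ∣ p * q := hcard ▸ Subgroup.card_subgroup_dvd_card K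
      have hmK' : Nat.card K ∣ Nat.card K' := Subgroup.card_dvd_of_le hKK'
      have hK'n : Nat.card K' ∣ p * q := hcard ▸ Subgroup.card_subgroup_dvd_card K'
      have hKne : Nat.card K ≠ p * q := by
        intro h
        exact hKtop (Subgroup.eq_top_of_card_eq K (h.trans hcard.symm))
      have hK'ne : Nat.card K' ≠ Nat.card K := by
        intro h
        exact hK'K (Subgroup.eq_of_le_of_card_ge hKK' h.le).symm
      have hKne1 : Nat.card K ≠ 1 := by
        intro h
        apply hK'K
        have hKbot : K = ⊥ := Subgroup.card_eq_one.mp h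
        apply le_antisymm _ hKK'
        intro k hk
        rw [hKmem]
        intro g
        have := hk g
        rw [hKbot, Subgroup.mem_bot, div_eq_one] at this
        exact this
      -- conclude Nat.card K' = p * q so K' = ⊤
      have hK'top : K' = ⊤ := by
        apply Subgroup.eq_top_of_card_eq
        rw [hcard]
        rcases dvd_prime_mul' hp hq hm with h | h | h | h
        · exact absurd h hKne1
        · rcases dvd_prime_mul' hp hq hK'n with h' | h' | h' | h'
          · rw [h'] at hmK'; rw [Nat.dvd_one.mp hmK'] at h
            exact absurd h.symm hp.ne_one
          · exact absurd (h'.trans h.symm) hK'ne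
          · rw [h, h'] at hmK'
            exact absurd ((Nat.prime_dvd_prime_iff_eq hp hq).mp hmK') hpq
          · exact h'
        · rcases dvd_prime_mul' hp hq hK'n with h' | h' | h' | h'
          · rw [h'] at hmK'; rw [Nat.dvd_one.mp hmK'] at h
            exact absurd h.symm hq.ne_one
          · rw [h, h'] at hmK'
            exact absurd ((Nat.prime_dvd_prime_iff_eq hq hp).mp hmK') hpq.symm
          · exact absurd (h'.trans h.symm) hK'ne
          · exact h'
        · exact absurd h hKne
      -- now s g / s 1 ∈ K for every g
      have hconst : ∀ g, s g / s 1 ∈ K := by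
        intro g
        have hg : g ∈ K' := hK'top ▸ Subgroup.mem_top g
        have := hg 1
        rwa [one_mul] at this
      set a := s 1 with ha
      -- swap lemma
      have hswap : ∀ g h, s (s g * h) = s (a * h) := by
        intro g h
        have h1 : s g * h = (a * h) * (s g / s 1) := by
          simp [div_eq_mul_inv, mul_comm, mul_assoc, mul_left_comm]
          rw [ha, mul_inv_cancel]
        rw [h1, hKper _ (hconst g)]
      -- rewritten cycle condition
      have cond' : ∀ g h, s (a * h) * s g = s (a * g) * s h := by
        intro g h
        have := cond g h
        rwa [hswap g h, hswap h g] at this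
      set c := s (a * 1) / s 1 with hcdef
      have hc : ∀ g, s (a * g) = c * s g := by
        intro g
        have h := cond' g 1
        have h2 : s (a * g) = s (a * 1) * s g * (s 1)⁻¹ := by
          rw [h, mul_assoc, mul_inv_cancel, mul_one]
        rw [h2, hcdef, div_eq_mul_inv]
        simp [mul_comm, mul_assoc, mul_left_comm]
      have hcK : c ∈ K := by
        rw [hcdef, mul_one]
        exact hconst a
      have hpow : ∀ (t : ℕ) (g : G), s (a ^ t * g) = c ^ t * s g := by
        intro t
        induction t with
        | zero => intro g; simp
        | succ t ih =>
          intro g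
          have h1 : a ^ (t + 1) * g = a * (a ^ t * g) := by
            rw [pow_succ]
            simp [mul_comm, mul_assoc, mul_left_comm]
          rw [h1, hc, ih, pow_succ]
          simp [mul_comm, mul_assoc, mul_left_comm]
      set r := Nat.card (G ⧸ K) with hrdef
      have hcardQ : p * q = r * Nat.card K := by
        rw [← hcard, hrdef]
        exact Subgroup.card_eq_card_quotient_mul_card_subgroup K
      -- a ^ r ∈ K
      have har : a ^ r ∈ K := by
        rw [← QuotientGroup.eq_one_iff]
        have : ((a : G ⧸ K)) ^ r = 1 := by
          rw [hrdef]
          exact pow_card_eq_one'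
        rw [← this]
        rfl
      have hcr : c ^ r = 1 := by
        have h1 := hpow r 1
        rw [mul_one] at h1
        have h2 : s (a ^ r) = s 1 := by
          have := hKper _ har 1
          rwa [one_mul] at this
        rw [h2] at h1
        have := h1.symm
        rwa [mul_eq_right] at this
      have hcm : c ^ Nat.card K = 1 := by
        have h : (⟨c, hcK⟩ : K) ^ Nat.card K = 1 := pow_card_eq_one'
        have h2 := congrArg (Subtype.val) h
        rwa [SubmonoidClass.coe_pow] at h2
      -- orderOf c divides both r and card K which are coprime
      have hco : Nat.Coprime r (Nat.card K) := by
        rcases dvd_prime_mul' hp hq hm with h | h | h | h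
        · exact absurd h hKne1
        · have : r = q := by
            rw [h] at hcardQ
            have hppos : 0 < p := hp.pos
            rw [mul_comm r p] at hcardQ
            exact (Nat.eq_of_mul_eq_mul_left hppos (by linarith [hcardQ])).symm
          rw [this, h]
          exact (Nat.coprime_primes hq hp).mpr (Ne.symm hpq)
        · have : r = p := by
            rw [h] at hcardQ
            have hqpos : 0 < q := hq.pos
            rw [mul_comm p q, mul_comm r q] at hcardQ
            exact (Nat.eq_of_mul_eq_mul_left hqpos (by linarith [hcardQ])).symm
          rw [this, h]
          exact (Nat.coprime_primes hp hq).mpr hpq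
        · exact absurd h hKne
      have hc1 : c = 1 := by
        have h1 : orderOf c ∣ r := orderOf_dvd_iff_pow_eq_one.mpr hcr
        have h2 : orderOf c ∣ Nat.card K := orderOf_dvd_iff_pow_eq_one.mpr hcm
        have := Nat.dvd_gcd h1 h2
        rw [Nat.Coprime] at hco
        rw [hco, Nat.dvd_one] at this
        exact orderOf_eq_one_iff.mp this
      have haK : a ∈ K := by
        intro g
        have := hc g
        rw [hc1, one_mul] at this
        rwa [mul_comm g a]
      apply hrange
      intro g
      have h1 : s g = a * (s g / s 1) := by
        rw [← ha]
        simp [div_eq_mul_inv, mul_comm, mul_assoc, mul_left_comm]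
      rw [h1]
      exact mul_mem haK (hconst g)

end LemmaA
-- PART2
namespace CycleSet

/-- key structural lemma -/
theorem key {X : Type*} [Finite X] (S : CycleSet X) (p q : ℕ)
    (hp : p.Prime) (hq : q.Prime) (hpq : p ≠ q)
    (hcard : Nat.card X = p * q) (htr : S.Transitive) (hab : S.AbelianPerm) :
    ∃ π : Equiv.Perm X, (∀ x, S.σ x = π) ∧ orderOf π = p * q ∧
      (∀ x y : X, ∃ k : ℕ, (π ^ k) x = y) := by
  have hne : Nonempty X := by
    have h0 : Nat.card X ≠ 0 := by
      rw [hcard]; exact Nat.mul_ne_zero hp.pos.ne' hq.pos.ne'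
    exact (Nat.card_ne_zero.mp h0).1
  obtain ⟨e⟩ := hne
  set G := S.permGroup with hG
  have hmem : ∀ x, S.σ x ∈ G := fun x => Subgroup.subset_closure ⟨x, rfl⟩
  -- freeness
  have hfree : ∀ g ∈ G, ∀ x : X, g x = x → g = 1 := by
    intro g hg x hx
    ext y
    obtain ⟨h, hh, rfl⟩ := htr x y
    have hcomm := hab g hg h hh
    calc g (h x) = (g * h) x := (Equiv.Perm.mul_apply g h x).symm
      _ = (h * g) x := by rw [hcomm]
      _ = h (g x) := Equiv.Perm.mul_apply h g x
      _ = h x := by rw [hx]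
  letI : CommGroup G := { (inferInstance : Group G) with
    mul_comm := fun a b => Subtype.ext (hab a a.2 b b.2) }
  -- the orbit map is bijective
  set ω : G → X := fun g => (g : Equiv.Perm X) e with hω
  have hωinj : Function.Injective ω := by
    intro g₁ g₂ hgg
    have h1 : ((g₂⁻¹ * g₁ : G) : Equiv.Perm X) e = e := by
      rw [Subgroup.coe_mul, Equiv.Perm.mul_apply]
      have hg : (g₁ : Equiv.Perm X) e = (g₂ : Equiv.Perm X) e := hgg
      rw [hg]
      simp
    have := hfree _ (g₂⁻¹ * g₁).2 e h1
    have h2 : g₂⁻¹ * g₁ = 1 := Subtype.ext (by rw [this]; rfl)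
    rw [inv_mul_eq_one] at h2
    exact h2.symm
  have hωsurj : Function.Surjective ω := by
    intro x
    obtain ⟨g, hg, hgx⟩ := htr e x
    exact ⟨⟨g, hg⟩, hgx⟩
  have hcardG : Nat.card G = p * q := by
    rw [Nat.card_eq_of_bijective ω ⟨hωinj, hωsurj⟩, hcard]
  -- transported map
  set s : G → G := fun g => ⟨S.σ (ω g), hmem _⟩ with hs
  have hcond : ∀ g h : G, s (s g * h) * s g = s (s h * g) * s h := by
    intro g h
    apply Subtype.ext
    have h1 : ω (s g * h) = S.σ (ω g) ((h : Equiv.Perm X) e) := by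
      simp only [hω, hs, Subgroup.coe_mul, Equiv.Perm.mul_apply]
    have h2 : ω (s h * g) = S.σ (ω h) ((g : Equiv.Perm X) e) := by
      simp only [hω, hs, Subgroup.coe_mul, Equiv.Perm.mul_apply]
    simp only [hs, Subgroup.coe_mul, h1, h2]
    ext w
    simp only [Equiv.Perm.mul_apply]
    exact S.cycl (ω g) (ω h) w
  have hgen : Subgroup.closure (Set.range s) = ⊤ := by
    apply Subgroup.map_injective (Subgroup.subtype_injective G)
    rw [MonoidHom.map_closure]
    have himg : (G.subtype) '' (Set.range s) = Set.range S.σ := by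
      ext y
      constructor
      · rintro ⟨-, ⟨g, rfl⟩, rfl⟩
        exact ⟨ω g, rfl⟩
      · rintro ⟨x, rfl⟩
        obtain ⟨g, rfl⟩ := hωsurj x
        exact ⟨s g, ⟨g, rfl⟩, rfl⟩
    rw [himg]
    have h2 : Subgroup.map G.subtype ⊤ = G := by
      rw [← MonoidHom.range_eq_map, Subgroup.subtype_range]
    rw [h2, hG]
    rfl
  have hsconst := lemA p q hp hq hpq hcardG s hcond hgen
  -- all σ equal
  have hσconst : ∀ x y : X, S.σ x = S.σ y := by
    intro x y
    obtain ⟨g, rfl⟩ := hωsurj x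
    obtain ⟨h, rfl⟩ := hωsurj y
    exact congrArg Subtype.val (hsconst g h)
  set π := S.σ e with hπ
  refine ⟨π, fun x => hσconst x e, ?_, ?_⟩
  · -- orderOf π = p * q
    have hrange : Set.range S.σ = {π} := by
      ext y
      simp only [Set.mem_range, Set.mem_singleton_iff]
      constructor
      · rintro ⟨x, rfl⟩; exact hσconst x e
      · rintro rfl; exact ⟨e, rfl⟩
    have hGz : G = Subgroup.zpowers π := by
      rw [hG, permGroup, hrange, Subgroup.zpowers_eq_closure]
    rw [← Nat.card_zpowers, ← hGz, hcardG]
  · -- transitivity by natural powers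
    intro x y
    obtain ⟨g, hg, hgy⟩ := htr x y
    have hrange : Set.range S.σ = {π} := by
      ext z
      simp only [Set.mem_range, Set.mem_singleton_iff]
      constructor
      · rintro ⟨x', rfl⟩; exact hσconst x' e
      · rintro rfl; exact ⟨e, rfl⟩
    have hGz : S.permGroup = Subgroup.zpowers π := by
      rw [permGroup, hrange, Subgroup.zpowers_eq_closure]
    rw [hGz] at hg
    have : g ∈ Submonoid.powers π := mem_powers_iff_mem_zpowers.mpr hg
    obtain ⟨k, hk⟩ := this
    refine ⟨k, ?_⟩
    have hk' : π ^ k = g := hk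
    rw [hk']
    exact hgy

end CycleSet

/-- Every indecomposable cycle set of cardinality `pq` (`p ≠ q` primes) with
abelian permutation group is isomorphic to `Z/pqZ` with `i·j = j+1`, whose
permutation group is cyclic of order `pq`. -/
theorem stmt17 {X : Type*} [Finite X] (S : CycleSet X) (p q : ℕ)
    (hp : p.Prime) (hq : q.Prime) (hpq : p ≠ q)
    (hcard : Nat.card X = p * q) (htr : S.Transitive) (hab : S.AbelianPerm) :
    ∃ T : CycleSet (ZMod (p * q)),
      (∀ i, T.σ i = Equiv.addRight (1 : ZMod (p * q))) ∧ S.Isomorphic T ∧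
        IsCyclic T.permGroup ∧ Nat.card T.permGroup = p * q := by
  haveI : NeZero (p * q) := ⟨Nat.mul_ne_zero hp.pos.ne' hq.pos.ne'⟩
  haveI : Fact (1 < p * q) := ⟨Nat.one_lt_mul_iff.mpr ⟨hp.pos, hq.pos, Or.inl hp.one_lt⟩⟩
  obtain ⟨π, hπ, horder, htrπ⟩ := CycleSet.key S p q hp hq hpq hcard htr hab
  -- the target cycle set
  refine ⟨⟨fun _ => Equiv.addRight (1 : ZMod (p * q)), fun x y z => rfl⟩, fun i => rfl, ?_, ?_, ?_⟩
  · -- Isomorphic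
    have hne : Nonempty X := by
      have h0 : Nat.card X ≠ 0 := by
        rw [hcard]; exact Nat.mul_ne_zero hp.pos.ne' hq.pos.ne'
      exact (Nat.card_ne_zero.mp h0).1
    obtain ⟨e⟩ := hne
    set φ : ZMod (p * q) → X := fun k => (π ^ k.val) e with hφ
    have hpowcast : ∀ k : ℕ, π ^ ((k : ZMod (p * q)).val) = π ^ k := by
      intro k
      rw [ZMod.val_natCast, pow_eq_pow_iff_modEq, horder]
      exact (Nat.mod_modEq k (p * q))
    have hφsurj : Function.Surjective φ := by
      intro x
      obtain ⟨k, hk⟩ := htrπ e x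
      exact ⟨(k : ZMod (p * q)), by rw [hφ]; simp only []; rw [hpowcast k]; exact hk⟩
    have hφinj : Function.Injective φ := by
      intro k₁ k₂ hkk
      have hmem : ∀ m : ℕ, π ^ m ∈ S.permGroup := by
        intro m
        have : S.σ e ∈ S.permGroup := Subgroup.subset_closure ⟨e, rfl⟩
        rw [hπ e] at this
        exact pow_mem this m
      -- freeness (reprove quickly)
      have hfree : ∀ g ∈ S.permGroup, ∀ x : X, g x = x → g = 1 := by
        intro g hg x hx
        ext y
        obtain ⟨h, hh, rfl⟩ := htr x y
        have hcomm := hab g hg h hh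
        calc g (h x) = (g * h) x := (Equiv.Perm.mul_apply g h x).symm
          _ = (h * g) x := by rw [hcomm]
          _ = h (g x) := Equiv.Perm.mul_apply h g x
          _ = h x := by rw [hx]
      have h1 : ((π ^ k₂.val)⁻¹ * π ^ k₁.val) e = e := by
        rw [Equiv.Perm.mul_apply]
        have : (π ^ k₁.val) e = (π ^ k₂.val) e := hkk
        rw [this]
        simp
      have h2 := hfree _ (mul_mem (inv_mem (hmem k₂.val)) (hmem k₁.val)) e h1
      rw [inv_mul_eq_one] at h2
      have h3 : k₁.val ≡ k₂.val [MOD p * q] := by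
        have := (pow_eq_pow_iff_modEq.mp h2).symm
        rwa [horder] at this
      have h4 : k₁.val = k₂.val :=
        (Nat.mod_eq_of_lt (ZMod.val_lt k₁)) ▸ (Nat.mod_eq_of_lt (ZMod.val_lt k₂)) ▸ h3
      exact ZMod.val_injective _ h4
    set E := Equiv.ofBijective φ ⟨hφinj, hφsurj⟩ with hE
    refine ⟨E.symm, E.symm.bijective, ?_⟩
    intro x y
    rw [hπ x]
    show E.symm (π y) = E.symm y + 1
    rw [Equiv.symm_apply_eq]
    set k := E.symm y with hk
    have hy : y = φ k := by rw [hk]; exact (E.apply_symm_apply y).symm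
    rw [hy]
    show π ((π ^ k.val) e) = φ (k + 1)
    have h5 : π ((π ^ k.val) e) = (π ^ (k.val + 1)) e := by
      rw [pow_succ', Equiv.Perm.mul_apply]
    rw [h5, hφ]
    show (π ^ (k.val + 1)) e = (π ^ ((k + 1).val)) e
    congr 1
    rw [pow_eq_pow_iff_modEq, horder, ZMod.val_add, ZMod.val_one]
    exact (Nat.mod_modEq _ _).symm
  · -- cyclic
    have hrange : Set.range (fun _ : ZMod (p * q) => Equiv.addRight (1 : ZMod (p * q)))
        = {Equiv.addRight (1 : ZMod (p * q))} := by
      simp [Set.range_const]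
    show IsCyclic (CycleSet.permGroup _)
    rw [CycleSet.permGroup]
    simp only []
    rw [hrange, ← Subgroup.zpowers_eq_closure]
    set g := Equiv.addRight (1 : ZMod (p * q))
    exact ⟨⟨⟨g, Subgroup.mem_zpowers g⟩, by
      rintro ⟨x, k, rfl⟩
      exact ⟨k, Subtype.ext (by rw [SubgroupClass.coe_zpow])⟩⟩⟩
  · -- card
    have hrange : Set.range (fun _ : ZMod (p * q) => Equiv.addRight (1 : ZMod (p * q)))
        = {Equiv.addRight (1 : ZMod (p * q))} := by
      simp [Set.range_const]
    show Nat.card (CycleSet.permGroup _ : Subgroup _) = p * q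
    rw [CycleSet.permGroup]
    simp only []
    rw [hrange, ← Subgroup.zpowers_eq_closure, Nat.card_zpowers]
    -- orderOf (addRight 1) = p * q
    have hpow : ∀ m : ℕ, (Equiv.addRight (1 : ZMod (p * q))) ^ m
        = Equiv.addRight ((m : ZMod (p * q))) := by
      intro m
      induction m with
      | zero => ext w; simp
      | succ m ih =>
        ext w
        rw [pow_succ, Equiv.Perm.mul_apply, ih]
        show w + 1 + (m : ZMod (p * q)) = w + ((m : ℕ) + 1 : ℕ)
        push_cast
        ring
    have heq1 : ∀ m : ℕ, (Equiv.addRight (1 : ZMod (p * q))) ^ m = 1 ↔ (p * q) ∣ m := by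
      intro m
      rw [hpow]
      constructor
      · intro h
        have := congrArg (fun f : Equiv.Perm (ZMod (p * q)) => f 0) h
        simp at this
        exact (ZMod.natCast_eq_zero_iff m (p * q)).mp this
      · intro h
        have : ((m : ℕ) : ZMod (p * q)) = 0 := (ZMod.natCast_eq_zero_iff m (p * q)).mpr h
        rw [this]
        ext w; simp
    apply Nat.dvd_antisymm
    · exact orderOf_dvd_iff_pow_eq_one.mpr ((heq1 (p * q)).mpr dvd_rfl)
    · exact (heq1 _).mp (pow_orderOf_eq_one _)
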